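/- Let p ≥ 5 be a prime with p ≡ 2 (mod 3). Let θ ∈ ℚ_p and q ∈ ℕ satisfy |θ−1|_p < 1, |(q:ℚ_p)|_p < 1 and (θ−1)(1−θ−q) ≠ 0. Then the cubic equation y³ − (1+θ+θ²)y² − (2θ+1)(1−θ−q)y − (1−θ−q)² = 0 has exactly one root y⁽¹⁾ in ℚ_p, and this root satisfies |y⁽¹⁾|_p = 1. -/

import Mathlib

namespace PottsAux

variable {p : ℕ} [Fact (Nat.Prime p)]

lemma nat_norm_le_one (n : ℕ) : ‖(n : ℚ_[p])‖ ≤ 1 := by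
  have := Padic.norm_int_le_one (p := p) (n : ℤ)
  push_cast at this
  exact this

lemma nat_norm_eq_one {n : ℕ} (h : ¬ p ∣ n) : ‖(n : ℚ_[p])‖ = 1 := by
  refine le_antisymm (nat_norm_le_one n) ?_
  by_contra hlt
  push_neg at hlt
  have h2 : ‖((n : ℤ) : ℚ_[p])‖ < 1 := by push_cast; exact hlt
  have := (Padic.norm_intCast_lt_one_iff (p := p) (k := (n : ℤ))).mp h2
  exact h (by exact_mod_cast this)

lemma add_norm_eq {a b : ℚ_[p]} (h : ‖b‖ < ‖a‖) : ‖a + b‖ = ‖a‖ := by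
  rw [Padic.add_eq_max_of_ne h.ne', max_eq_left h.le]

lemma nonarch_le {a b : ℚ_[p]} {r : ℝ} (ha : ‖a‖ ≤ r) (hb : ‖b‖ ≤ r) : ‖a + b‖ ≤ r :=
  le_trans (Padic.nonarchimedean a b) (max_le ha hb)

lemma nonarch_lt {a b : ℚ_[p]} {r : ℝ} (ha : ‖a‖ < r) (hb : ‖b‖ < r) : ‖a + b‖ < r :=
  lt_of_le_of_lt (Padic.nonarchimedean a b) (max_lt ha hb)

lemma norm_two (hp5 : 5 ≤ p) : ‖(2 : ℚ_[p])‖ = 1 := by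
  have : ¬ p ∣ 2 := fun h => by have := Nat.le_of_dvd (by norm_num) h; omega
  simpa using nat_norm_eq_one (p := p) this

lemma norm_three (hp5 : 5 ≤ p) : ‖(3 : ℚ_[p])‖ = 1 := by
  have : ¬ p ∣ 3 := fun h => by have := Nat.le_of_dvd (by norm_num) h; omega
  simpa using nat_norm_eq_one (p := p) this

/-- no root of the cubic has norm < 1, when p ≡ 2 mod 3 -/
lemma no_small_root (hp5 : 5 ≤ p) (hp3 : p % 3 = 2) (t s : ℚ_[p])
    (ht : ‖t‖ < 1) (hs : ‖s‖ < 1) (hs0 : s ≠ 0) (y : ℚ_[p])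
    (hPy : y ^ 3 - (3 + 3*t + t^2) * y ^ 2 - (3 + 2*t) * s * y - s ^ 2 = 0) :
    ¬ ‖y‖ < 1 := by
  intro hylt
  have hp := (Fact.out : Nat.Prime p)
  have h2 : ‖(2 : ℚ_[p])‖ = 1 := norm_two hp5
  have h3 : ‖(3 : ℚ_[p])‖ = 1 := norm_three hp5
  have hspos : (0:ℝ) < ‖s‖ := norm_pos_iff.mpr hs0
  have hy0 : y ≠ 0 := by
    rintro rfl
    simp only [ne_eq, zero_pow, mul_zero, sub_zero, zero_sub, neg_eq_zero,
      pow_eq_zero_iff, OfNat.ofNat_ne_zero, not_false_eq_true] at hPy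
    exact hs0 (by simpa using hPy)
  have hypos : (0:ℝ) < ‖y‖ := norm_pos_iff.mpr hy0
  -- norms of coefficients
  have hct : ‖3*t + t^2‖ < 1 := by
    refine nonarch_lt ?_ ?_
    · rw [norm_mul, h3, one_mul]; exact ht
    · rw [norm_pow]; nlinarith [norm_nonneg t]
  have hcA : ‖3 + 3*t + t^2‖ ≤ 1 := by
    refine nonarch_le (nonarch_le h3.le ?_) ?_
    · rw [norm_mul, h3, one_mul]; exact ht.le
    · rw [norm_pow]; nlinarith [norm_nonneg t]
  have hcB : ‖3 + 2*t‖ ≤ 1 := by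
    refine nonarch_le h3.le ?_
    rw [norm_mul, h2, one_mul]; exact ht.le
  -- ‖y‖ = ‖s‖
  have hys : ‖y‖ = ‖s‖ := by
    rcases lt_trichotomy ‖y‖ ‖s‖ with h | h | h
    · exfalso
      have heq : s ^ 2 = y ^ 3 + (-((3 + 3*t + t^2) * y ^ 2) + -((3 + 2*t) * s * y)) := by
        linear_combination -hPy
      have hlt : ‖y ^ 3 + (-((3 + 3*t + t^2) * y ^ 2) + -((3 + 2*t) * s * y))‖ < ‖s‖^2 := by
        refine nonarch_lt ?_ (nonarch_lt ?_ ?_)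
        · rw [norm_pow]
          calc ‖y‖^3 < ‖s‖^3 := by gcongr
            _ = ‖s‖^2 * ‖s‖ := by ring
            _ < ‖s‖^2 * 1 := by gcongr
            _ = ‖s‖^2 := mul_one _
        · rw [norm_neg, norm_mul, norm_pow]
          calc ‖3 + 3*t + t^2‖ * ‖y‖^2 ≤ 1 * ‖y‖^2 := by gcongr
            _ = ‖y‖^2 := one_mul _
            _ < ‖s‖^2 := by gcongr
        · rw [norm_neg, norm_mul, norm_mul]
          calc ‖3 + 2*t‖ * ‖s‖ * ‖y‖ ≤ 1 * ‖s‖ * ‖y‖ := by gcongr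
            _ = ‖s‖ * ‖y‖ := by ring
            _ < ‖s‖ * ‖s‖ := by gcongr
            _ = ‖s‖^2 := (sq ‖s‖).symm
      rw [← heq, norm_pow] at hlt
      exact lt_irrefl _ hlt
    · exact h
    · exfalso
      have heq : (3:ℚ_[p]) * y ^ 2
          = y ^ 3 + (-((3*t + t^2) * y ^ 2) + (-((3 + 2*t) * s * y) + -(s^2))) := by
        linear_combination -hPy
      have hlt : ‖y ^ 3 + (-((3*t + t^2) * y ^ 2) + (-((3 + 2*t) * s * y) + -(s^2)))‖
          < ‖y‖^2 := by
        refine nonarch_lt ?_ (nonarch_lt ?_ (nonarch_lt ?_ ?_))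
        · rw [norm_pow]
          calc ‖y‖^3 = ‖y‖^2 * ‖y‖ := by ring
            _ < ‖y‖^2 * 1 := by gcongr
            _ = ‖y‖^2 := mul_one _
        · rw [norm_neg, norm_mul, norm_pow]
          calc ‖3*t + t^2‖ * ‖y‖^2 < 1 * ‖y‖^2 := by
                exact mul_lt_mul_of_pos_right hct (pow_pos hypos 2)
            _ = ‖y‖^2 := one_mul _
        · rw [norm_neg, norm_mul, norm_mul]
          calc ‖3 + 2*t‖ * ‖s‖ * ‖y‖ ≤ 1 * ‖s‖ * ‖y‖ := by gcongr
            _ = ‖s‖ * ‖y‖ := by ring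
            _ < ‖y‖ * ‖y‖ := by gcongr
            _ = ‖y‖^2 := (sq ‖y‖).symm
        · rw [norm_neg, norm_pow]
          gcongr
      rw [← heq, norm_mul, h3, one_mul, norm_pow] at hlt
      exact lt_irrefl _ hlt
  -- the key square identity
  have hs2 : s^2 ≠ 0 := pow_ne_zero 2 hs0
  have hid0 : (6*y + 3*s)^2 = -3*s^2 + 12*(y*(y^2 - (3*t + t^2)*y - 2*(t*s))) := by
    linear_combination (-12 : ℚ_[p]) * hPy
  set c : ℚ_[p] := (6*y + 3*s)/s with hc_def
  set w : ℚ_[p] := 12*(y*(y^2 - (3*t + t^2)*y - 2*(t*s)))/s^2 with hw_def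
  have hc2 : c^2 = -3 + w := by
    rw [hc_def, hw_def, div_pow, hid0, add_div, mul_div_cancel_right₀ _ hs2]
  have hinner : ‖y^2 - (3*t + t^2)*y - 2*(t*s)‖ < ‖s‖ := by
    have e1 : y^2 - (3*t + t^2)*y - 2*(t*s) = y^2 + (-((3*t + t^2)*y) + -(2*(t*s))) := by ring
    rw [e1]
    refine nonarch_lt ?_ (nonarch_lt ?_ ?_)
    · rw [norm_pow, hys]
      calc ‖s‖^2 = ‖s‖ * ‖s‖ := sq ‖s‖
        _ < 1 * ‖s‖ := by gcongr
        _ = ‖s‖ := one_mul _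
    · rw [norm_neg, norm_mul, hys]
      calc ‖3*t + t^2‖ * ‖s‖ < 1 * ‖s‖ := mul_lt_mul_of_pos_right hct hspos
        _ = ‖s‖ := one_mul _
    · rw [norm_neg, norm_mul, norm_mul, h2, one_mul]
      calc ‖t‖ * ‖s‖ < 1 * ‖s‖ := mul_lt_mul_of_pos_right ht hspos
        _ = ‖s‖ := one_mul _
  have hwlt : ‖w‖ < 1 := by
    have h12 : ‖(12:ℚ_[p])‖ ≤ 1 := by
      have e : (12:ℚ_[p]) = ((12:ℕ):ℚ_[p]) := by norm_num
      rw [e]; exact nat_norm_le_one 12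
    rw [hw_def, norm_div, norm_mul, norm_mul, norm_pow, hys]
    rw [div_lt_one (by positivity)]
    calc ‖(12:ℚ_[p])‖ * (‖s‖ * ‖y^2 - (3*t + t^2)*y - 2*(t*s)‖)
        ≤ 1 * (‖s‖ * ‖y^2 - (3*t + t^2)*y - 2*(t*s)‖) := by
          gcongr
      _ = ‖s‖ * ‖y^2 - (3*t + t^2)*y - 2*(t*s)‖ := one_mul _
      _ < ‖s‖ * ‖s‖ := by gcongr
      _ = ‖s‖^2 := (sq ‖s‖).symm
  have hcnorm : ‖c‖ = 1 := by
    have hn3 : ‖(-3 : ℚ_[p])‖ = 1 := by rw [norm_neg]; exact h3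
    have hsq : ‖c^2‖ = 1 := by
      rw [hc2, add_norm_eq (by rw [hn3]; exact hwlt), hn3]
    rw [norm_pow] at hsq
    have hfac : (‖c‖ - 1) * (‖c‖ + 1) = 0 := by nlinarith
    rcases mul_eq_zero.mp hfac with h | h
    · linarith
    · nlinarith [norm_nonneg c]
  -- pass to ℤ_p and ZMod p
  set C : ℤ_[p] := ⟨c, hcnorm.le⟩ with hC_def
  have hCc : (C : ℚ_[p]) = c := rfl
  have hcoe : ((C^2 + 3 : ℤ_[p]) : ℚ_[p]) = c^2 + 3 := by
    have h3c : ((3:ℤ_[p]):ℚ_[p]) = 3 := rfl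
    rw [PadicInt.coe_add, PadicInt.coe_pow, hCc, h3c]
  have hnorm_small : ‖(C^2 + 3 : ℤ_[p])‖ < 1 := by
    rw [PadicInt.norm_def, hcoe, hc2]
    have e : -3 + w + 3 = w := by ring
    rw [e]
    exact hwlt
  have hmem : (C^2 + 3 : ℤ_[p]) ∈ RingHom.ker (PadicInt.toZMod : ℤ_[p] →+* ZMod p) := by
    rw [PadicInt.ker_toZMod, IsLocalRing.mem_maximalIdeal, PadicInt.mem_nonunits]
    exact hnorm_small
  have hx : (PadicInt.toZMod C)^2 = -3 := by
    have h0 : PadicInt.toZMod (C^2 + 3 : ℤ_[p]) = 0 := hmem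
    rw [map_add, map_pow, map_ofNat] at h0
    linear_combination h0
  -- final contradiction: -3 is not a square mod p when p ≡ 2 mod 3
  set x : ZMod p := PadicInt.toZMod C with hx_def
  haveI : Fact (Nat.Prime 3) := ⟨by norm_num⟩
  have h2Z : (2 : ZMod p) ≠ 0 := by
    intro h
    have h' : ((2:ℕ) : ZMod p) = 0 := by exact_mod_cast h
    have := (ZMod.natCast_eq_zero_iff 2 p).mp h'
    have := Nat.le_of_dvd (by norm_num) this
    omega
  set ω : ZMod p := (x - 1) * (2:ZMod p)⁻¹ with hω_def
  have hω3 : ω^3 = 1 := by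
    rw [hω_def]
    field_simp
    linear_combination (x - 3) * hx
  have hω1 : ω ≠ 1 := by
    intro h
    rw [hω_def] at h
    have hx3 : x = 3 := by
      field_simp [h2Z] at h
      linear_combination h
    have h12 : ((12:ℕ) : ZMod p) = 0 := by
      push_cast
      linear_combination hx - (x + 3) * hx3
    have hdvd := (ZMod.natCast_eq_zero_iff 12 p).mp h12
    have hle := Nat.le_of_dvd (by norm_num) hdvd
    interval_cases p <;> revert hdvd <;>
      first | (exact fun _ => absurd hp (by decide)) | decide
  have hωu : IsUnit ω := IsUnit.of_mul_eq_one (a := ω) (ω^2) (by rw [← pow_succ']; exact hω3)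
  have hu3 : hωu.unit ^ 3 = 1 := Units.ext (by simpa [IsUnit.unit_spec] using hω3)
  have hu1 : hωu.unit ≠ 1 := by
    intro h
    apply hω1
    have := congrArg (Units.val) h
    simpa using this
  have horder : orderOf hωu.unit = 3 := orderOf_eq_prime hu3 hu1
  have hdvd : orderOf hωu.unit ∣ Fintype.card (ZMod p)ˣ := orderOf_dvd_card
  rw [horder, ZMod.card_units_eq_totient, Nat.totient_prime hp] at hdvd
  omega

set_option maxHeartbeats 1000000 in
open Polynomial in
theorem potts_aux (hp5 : 5 ≤ p) (hp3 : p % 3 = 2) (t s : ℚ_[p])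
    (ht : ‖t‖ < 1) (hs : ‖s‖ < 1) (hs0 : s ≠ 0) :
    (∃! y : ℚ_[p], y ^ 3 - (3 + 3*t + t^2) * y ^ 2 - (3 + 2*t) * s * y - s ^ 2 = 0) ∧
    ∀ y : ℚ_[p], y ^ 3 - (3 + 3*t + t^2) * y ^ 2 - (3 + 2*t) * s * y - s ^ 2 = 0 →
      ‖y‖ = 1 := by
  have hp := (Fact.out : Nat.Prime p)
  have h2 : ‖(2 : ℚ_[p])‖ = 1 := norm_two hp5
  have h3 : ‖(3 : ℚ_[p])‖ = 1 := norm_three hp5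
  have h9 : ‖(9 : ℚ_[p])‖ = 1 := by
    rw [show (9:ℚ_[p]) = 3^2 by norm_num, norm_pow, h3]; norm_num
  have hspos : (0:ℝ) < ‖s‖ := norm_pos_iff.mpr hs0
  have hct : ‖3*t + t^2‖ < 1 := by
    refine nonarch_lt ?_ ?_
    · rw [norm_mul, h3, one_mul]; exact ht
    · rw [norm_pow]; nlinarith [norm_nonneg t]
  have hcA : ‖3 + 3*t + t^2‖ ≤ 1 := by
    refine nonarch_le (nonarch_le h3.le ?_) ?_
    · rw [norm_mul, h3, one_mul]; exact ht.le
    · rw [norm_pow]; nlinarith [norm_nonneg t]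
  have hcB : ‖3 + 2*t‖ ≤ 1 := by
    refine nonarch_le h3.le ?_
    rw [norm_mul, h2, one_mul]; exact ht.le
  -- every root has norm ≤ 1
  have hA : ∀ y : ℚ_[p],
      y ^ 3 - (3 + 3*t + t^2) * y ^ 2 - (3 + 2*t) * s * y - s ^ 2 = 0 → ‖y‖ ≤ 1 := by
    intro y hy
    by_contra hgt
    push_neg at hgt
    have heq : y^3 = (3 + 3*t + t^2) * y^2 + ((3 + 2*t) * s * y + s^2) := by
      linear_combination hy
    have hb : ‖(3 + 3*t + t^2) * y^2 + ((3 + 2*t) * s * y + s^2)‖ ≤ ‖y‖^2 := by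
      refine nonarch_le ?_ (nonarch_le ?_ ?_)
      · rw [norm_mul, norm_pow]
        calc ‖3 + 3*t + t^2‖ * ‖y‖^2 ≤ 1 * ‖y‖^2 := by gcongr
          _ = ‖y‖^2 := one_mul _
      · rw [norm_mul, norm_mul]
        calc ‖3 + 2*t‖ * ‖s‖ * ‖y‖ ≤ 1 * 1 * ‖y‖ := by gcongr
          _ = ‖y‖ := by ring
          _ ≤ ‖y‖^2 := by nlinarith
      · rw [norm_pow]
        nlinarith [norm_nonneg s]
    rw [← heq, norm_pow] at hb
    have hlt : ‖y‖^2 < ‖y‖^3 := by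
      calc ‖y‖^2 = ‖y‖^2 * 1 := (mul_one _).symm
        _ < ‖y‖^2 * ‖y‖ := by gcongr
        _ = ‖y‖^3 := by ring
    linarith
  -- every root has norm 1 and is close to 3
  have hB : ∀ y : ℚ_[p],
      y ^ 3 - (3 + 3*t + t^2) * y ^ 2 - (3 + 2*t) * s * y - s ^ 2 = 0 →
      ‖y‖ = 1 ∧ ‖y - 3‖ < 1 := by
    intro y hy
    have hle := hA y hy
    have hnlt := no_small_root hp5 hp3 t s ht hs hs0 y hy
    have hy1 : ‖y‖ = 1 := le_antisymm hle (not_lt.mp hnlt)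
    have heq : y^2 * (y - 3) = (3*t + t^2) * y^2 + ((3 + 2*t) * s * y + s^2) := by
      linear_combination hy
    have hb : ‖(3*t + t^2) * y^2 + ((3 + 2*t) * s * y + s^2)‖ < 1 := by
      refine nonarch_lt ?_ (nonarch_lt ?_ ?_)
      · rw [norm_mul, norm_pow, hy1]
        simpa using hct
      · rw [norm_mul, norm_mul, hy1]
        calc ‖3 + 2*t‖ * ‖s‖ * 1 ≤ 1 * ‖s‖ * 1 := by gcongr
          _ = ‖s‖ := by ring
          _ < 1 := hs
      · rw [norm_pow]; nlinarith [norm_nonneg s]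
    rw [← heq, norm_mul, norm_pow, hy1, one_pow, one_mul] at hb
    exact ⟨hy1, hb⟩
  -- set up Hensel's lemma over ℤ_p
  set T : ℤ_[p] := ⟨t, ht.le⟩ with hT_def
  set S : ℤ_[p] := ⟨s, hs.le⟩ with hS_def
  have hTc : (T : ℚ_[p]) = t := rfl
  have hSc : (S : ℚ_[p]) = s := rfl
  have h3Zc : ((3 : ℤ_[p]) : ℚ_[p]) = 3 := rfl
  have h2Zc : ((2 : ℤ_[p]) : ℚ_[p]) = 2 := rfl
  have h6Zc : ((6 : ℤ_[p]) : ℚ_[p]) = 6 := rfl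
  have h27Zc : ((27 : ℤ_[p]) : ℚ_[p]) = 27 := rfl
  set F : Polynomial ℤ_[p] :=
    X^3 - C (3 + 3*T + T^2) * X^2 - C ((3 + 2*T)*S) * X - C (S^2) with hF_def
  have heval : ∀ z : ℤ_[p],
      F.eval z = z^3 - (3 + 3*T + T^2)*z^2 - (3 + 2*T)*S*z - S^2 := by
    intro z; simp [hF_def]
  have hevalQ : ∀ z : ℤ_[p], ((F.eval z : ℤ_[p]) : ℚ_[p])
      = (z:ℚ_[p])^3 - (3 + 3*t + t^2)*(z:ℚ_[p])^2 - (3 + 2*t)*s*(z:ℚ_[p]) - s^2 := by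
    intro z
    rw [heval]
    push_cast [hTc, hSc]
    simp only [h2Zc, h3Zc]
    try ring
  have hder : F.derivative.eval 3 = 27 - (3 + 3*T + T^2)*6 - (3 + 2*T)*S := by
    simp [hF_def, derivative_pow]
    ring
  have hderQ : ((F.derivative.eval 3 : ℤ_[p]) : ℚ_[p])
      = 9 + (-(18*t) + (-(6*t^2) + (-(3*s) + -(2*(t*s))))) := by
    rw [hder]
    push_cast [hTc, hSc]
    simp only [h2Zc, h3Zc, h6Zc, h27Zc]
    ring
  have hder_norm : ‖F.derivative.eval 3‖ = 1 := by
    rw [PadicInt.norm_def, hderQ, add_norm_eq, h9]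
    rw [h9]
    refine nonarch_lt ?_ (nonarch_lt ?_ (nonarch_lt ?_ ?_))
    · rw [norm_neg, norm_mul]
      have h18 : ‖(18:ℚ_[p])‖ ≤ 1 := by
        rw [show (18:ℚ_[p]) = ((18:ℕ):ℚ_[p]) by norm_num]; exact nat_norm_le_one 18
      nlinarith [norm_nonneg t, norm_nonneg (18:ℚ_[p])]
    · rw [norm_neg, norm_mul, norm_pow]
      have h6 : ‖(6:ℚ_[p])‖ ≤ 1 := by
        rw [show (6:ℚ_[p]) = ((6:ℕ):ℚ_[p]) by norm_num]; exact nat_norm_le_one 6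
      nlinarith [norm_nonneg t, norm_nonneg (6:ℚ_[p])]
    · rw [norm_neg, norm_mul, h3, one_mul]; exact hs
    · rw [norm_neg, norm_mul, norm_mul, h2, one_mul]
      simpa using mul_lt_mul'' ht hs (norm_nonneg t) (norm_nonneg s)
  have hFeval3Q : ((F.eval 3 : ℤ_[p]) : ℚ_[p])
      = -(27*t) + (-(9*t^2) + (-(9*s) + (-(6*(t*s)) + -(s^2)))) := by
    rw [hevalQ 3, h3Zc]
    ring
  have hFeval3_norm : ‖F.eval 3‖ < 1 := by
    rw [PadicInt.norm_def, hFeval3Q]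
    refine nonarch_lt ?_ (nonarch_lt ?_ (nonarch_lt ?_ (nonarch_lt ?_ ?_)))
    · rw [norm_neg, norm_mul]
      have h27 : ‖(27:ℚ_[p])‖ ≤ 1 := by
        rw [show (27:ℚ_[p]) = ((27:ℕ):ℚ_[p]) by norm_num]; exact nat_norm_le_one 27
      nlinarith [norm_nonneg t, norm_nonneg (27:ℚ_[p])]
    · rw [norm_neg, norm_mul, norm_pow, h9, one_mul]
      nlinarith [norm_nonneg t]
    · rw [norm_neg, norm_mul, h9, one_mul]; exact hs
    · rw [norm_neg, norm_mul, norm_mul]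
      have h6 : ‖(6:ℚ_[p])‖ ≤ 1 := by
        rw [show (6:ℚ_[p]) = ((6:ℕ):ℚ_[p]) by norm_num]; exact nat_norm_le_one 6
      calc ‖(6:ℚ_[p])‖ * (‖t‖ * ‖s‖) ≤ 1 * (‖t‖ * ‖s‖) := by gcongr
        _ = ‖t‖ * ‖s‖ := one_mul _
        _ < 1 := by simpa using mul_lt_mul'' ht hs (norm_nonneg t) (norm_nonneg s)
    · rw [norm_neg, norm_pow]
      nlinarith [norm_nonneg s]
  have hnorm : ‖F.eval 3‖ < ‖F.derivative.eval 3‖ ^ 2 := by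
    rw [hder_norm]
    simpa using hFeval3_norm
  obtain ⟨z, hz0, hz3, -, hzuniq⟩ := hensels_lemma hnorm
  set y₀ : ℚ_[p] := (z : ℚ_[p]) with hy₀_def
  have hPy₀ : y₀ ^ 3 - (3 + 3*t + t^2) * y₀ ^ 2 - (3 + 2*t) * s * y₀ - s ^ 2 = 0 := by
    have h0 : ((F.eval z : ℤ_[p]) : ℚ_[p]) = 0 := by rw [← Polynomial.coe_aeval_eq_eval, hz0]; rfl
    rw [hevalQ z] at h0
    exact h0
  refine ⟨⟨y₀, hPy₀, ?_⟩, fun y hy => (hB y hy).1⟩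
  intro y hy
  obtain ⟨hy1, hy3⟩ := hB y hy
  set Z' : ℤ_[p] := ⟨y, hy1.le⟩ with hZ'_def
  have hZ'c : (Z' : ℚ_[p]) = y := rfl
  have hFZ' : F.eval Z' = 0 := by
    have h0 : ((F.eval Z' : ℤ_[p]) : ℚ_[p]) = 0 := by
      rw [hevalQ Z', hZ'c]; exact hy
    exact PadicInt.coe_eq_zero.mp h0
  have hZ3 : ‖Z' - 3‖ < ‖F.derivative.eval 3‖ := by
    rw [hder_norm, PadicInt.norm_def]
    have hc : ((Z' - 3 : ℤ_[p]) : ℚ_[p]) = y - 3 := by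
      rw [PadicInt.coe_sub, hZ'c, h3Zc]
    rw [hc]
    exact hy3
  have hZz : Z' = z := hzuniq Z' (by rw [Polynomial.coe_aeval_eq_eval]; exact hFZ') hZ3
  calc y = (Z' : ℚ_[p]) := rfl
    _ = (z : ℚ_[p]) := by rw [hZz]
    _ = y₀ := rfl

end PottsAux

/-- For a prime `p ≥ 5` with `p ≡ 2 (mod 3)`, `θ ∈ ℚ_p` and `q ∈ ℕ` with
`‖θ-1‖ < 1`, `‖q‖ < 1` and `(θ-1)(1-θ-q) ≠ 0`, the cubic
`y³ - (1+θ+θ²)y² - (2θ+1)(1-θ-q)y - (1-θ-q)² = 0` has exactly one root in `ℚ_p`,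
and this root has norm `1`. -/
theorem potts_bethe_cubic_unique_root (p : ℕ) [Fact (Nat.Prime p)]
    (hp5 : 5 ≤ p) (hp3 : p % 3 = 2) (θ : ℚ_[p]) (q : ℕ)
    (hθ : ‖θ - 1‖ < 1) (hq : ‖(q : ℚ_[p])‖ < 1)
    (hne : (θ - 1) * (1 - θ - (q : ℚ_[p])) ≠ 0) :
    (∃! y : ℚ_[p],
      y ^ 3 - (1 + θ + θ ^ 2) * y ^ 2 - (2 * θ + 1) * (1 - θ - (q : ℚ_[p])) * y
        - (1 - θ - (q : ℚ_[p])) ^ 2 = 0) ∧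
    ∀ y : ℚ_[p],
      y ^ 3 - (1 + θ + θ ^ 2) * y ^ 2 - (2 * θ + 1) * (1 - θ - (q : ℚ_[p])) * y
        - (1 - θ - (q : ℚ_[p])) ^ 2 = 0 → ‖y‖ = 1 := by
  set t : ℚ_[p] := θ - 1 with ht_def
  set s : ℚ_[p] := 1 - θ - (q : ℚ_[p]) with hs_def
  have hs0 : s ≠ 0 := fun h => hne (by rw [h, mul_zero])
  have hs : ‖s‖ < 1 := by
    have e : s = -t + -(q : ℚ_[p]) := by rw [hs_def, ht_def]; ring
    rw [e]
    refine PottsAux.nonarch_lt ?_ ?_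
    · rw [norm_neg]; exact hθ
    · rw [norm_neg]; exact hq
  have hkey := PottsAux.potts_aux hp5 hp3 t s hθ hs hs0
  have hconv : ∀ y : ℚ_[p],
      y ^ 3 - (1 + θ + θ ^ 2) * y ^ 2 - (2 * θ + 1) * s * y - s ^ 2
      = y ^ 3 - (3 + 3*t + t^2) * y ^ 2 - (3 + 2*t) * s * y - s ^ 2 := by
    intro y
    rw [ht_def]
    ring
  constructor
  · obtain ⟨⟨y₀, hy₀, huniq⟩, -⟩ := hkey
    refine ⟨y₀, ?_, ?_⟩
    · show y₀ ^ 3 - (1 + θ + θ ^ 2) * y₀ ^ 2 - (2 * θ + 1) * s * y₀ - s ^ 2 = 0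
      rw [hconv y₀]; exact hy₀
    · intro y hy
      have hy' : y ^ 3 - (1 + θ + θ ^ 2) * y ^ 2 - (2 * θ + 1) * s * y - s ^ 2 = 0 := hy
      rw [hconv y] at hy'
      exact huniq y hy'
  · intro y hy
    rw [hconv y] at hy
    exact hkey.2 y hy
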